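/- arXiv:2107.04877 — 3 statements merged into one kernel-verified Lean document; each statement's English description precedes it below -/
import Mathlib

section
/- A connected graph G of order n has partition dimension n if and only if G is the complete graph K_n. -/
open SimpleGraph Finset

variable {V : Type*}

/-- A vertex `x` resolves the pair `u, v` if it is at different distances from them. -/
def IsResolvingSet (G : SimpleGraph V) (S : Set V) : Prop :=
  ∀ u v : V, u ≠ v → ∃ x ∈ S, G.dist u x ≠ G.dist v x

/-- The metric dimension: minimum cardinality of a resolving set. -/
noncomputable def metricDim (G : SimpleGraph V) [Fintype V] : ℕ :=
  sInf {n | ∃ S : Finset V, S.card = n ∧ IsResolvingSet G ↑S}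

/-- `w` strongly resolves `u, v`. -/
def StronglyResolves (G : SimpleGraph V) (w u v : V) : Prop :=
  G.dist w u = G.dist w v + G.dist v u ∨ G.dist w v = G.dist w u + G.dist u v

def IsStrongResolvingSet (G : SimpleGraph V) (S : Set V) : Prop :=
  ∀ u v : V, u ≠ v → ∃ w ∈ S, StronglyResolves G w u v

noncomputable def strongMetricDim (G : SimpleGraph V) [Fintype V] : ℕ :=
  sInf {n | ∃ S : Finset V, S.card = n ∧ IsStrongResolvingSet G ↑S}

/-- `u` is maximally distant from `v`. -/
def MaxDistant (G : SimpleGraph V) (u v : V) : Prop :=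
  ∀ w : V, G.Adj u w → G.dist v w ≤ G.dist v u

def MutuallyMaxDistant (G : SimpleGraph V) (u v : V) : Prop :=
  MaxDistant G u v ∧ MaxDistant G v u

/-- The strong resolving graph of `G`. -/
def strongResolvingGraph (G : SimpleGraph V) : SimpleGraph V where
  Adj u v := u ≠ v ∧ MutuallyMaxDistant G u v
  symm := by
    constructor
    intro u v h
    exact ⟨h.1.symm, h.2.2, h.2.1⟩
  loopless := by
    constructor
    intro u h
    exact h.1 rfl

def IsVertexCover (H : SimpleGraph V) (S : Set V) : Prop :=
  ∀ u v : V, H.Adj u v → u ∈ S ∨ v ∈ S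

noncomputable def vertexCoverNum (H : SimpleGraph V) [Fintype V] : ℕ :=
  sInf {n | ∃ S : Finset V, S.card = n ∧ _root_.IsVertexCover H ↑S}

def IsLocalResolvingSet (G : SimpleGraph V) (S : Set V) : Prop :=
  ∀ u v : V, G.Adj u v → ∃ x ∈ S, G.dist u x ≠ G.dist v x

noncomputable def localMetricDim (G : SimpleGraph V) [Fintype V] : ℕ :=
  sInf {n | ∃ S : Finset V, S.card = n ∧ IsLocalResolvingSet G ↑S}

def IsIndepVertexSet (G : SimpleGraph V) (S : Set V) : Prop :=
  S.Pairwise fun u v => ¬ G.Adj u v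

noncomputable def indepNum (G : SimpleGraph V) [Fintype V] : ℕ :=
  sSup {n | ∃ S : Finset V, S.card = n ∧ IsIndepVertexSet G ↑S}

def IsAdjResolvingSet (G : SimpleGraph V) (S : Set V) : Prop :=
  ∀ x y : V, x ≠ y → x ∉ S → y ∉ S →
    ∃ s ∈ S, (G.Adj s x ∧ ¬ G.Adj s y) ∨ (¬ G.Adj s x ∧ G.Adj s y)

noncomputable def adjDim (G : SimpleGraph V) [Fintype V] : ℕ :=
  sInf {n | ∃ S : Finset V, S.card = n ∧ IsAdjResolvingSet G ↑S}

def IsKResolvingSet (G : SimpleGraph V) (k : ℕ) (S : Finset V) : Prop :=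
  ∀ x y : V, x ≠ y → k ≤ (S.filter fun w => G.dist x w ≠ G.dist y w).card

noncomputable def kMetricDim (G : SimpleGraph V) [Fintype V] (k : ℕ) : ℕ :=
  sInf {n | ∃ S : Finset V, S.card = n ∧ IsKResolvingSet G k S}

def IsKMetricDimensional (G : SimpleGraph V) (k : ℕ) : Prop :=
  (∃ S : Finset V, IsKResolvingSet G k S) ∧
    ∀ j : ℕ, (∃ S : Finset V, IsKResolvingSet G j S) → j ≤ k

/-- distance from a vertex to a finite set of vertices -/
noncomputable def fsetDist (G : SimpleGraph V) (v : V) (P : Finset V) : ℕ :=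
  sInf {d | ∃ w ∈ P, G.dist v w = d}

def IsResolvingPartition [Fintype V] [DecidableEq V] (G : SimpleGraph V)
    (Pt : Finpartition (Finset.univ : Finset V)) : Prop :=
  ∀ u v : V, u ≠ v → ∃ P ∈ Pt.parts, fsetDist G u P ≠ fsetDist G v P

noncomputable def partitionDim (G : SimpleGraph V) [Fintype V] [DecidableEq V] : ℕ :=
  sInf {n | ∃ Pt : Finpartition (Finset.univ : Finset V), Pt.parts.card = n ∧ IsResolvingPartition G Pt}

def SetStronglyResolves (G : SimpleGraph V) (W : Finset V) (x y : V) : Prop :=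
  x ∉ W ∧ y ∉ W ∧
    (fsetDist G x W = G.dist x y + fsetDist G y W ∨
      fsetDist G y W = G.dist y x + fsetDist G x W)

def IsStrongResolvingPartition [Fintype V] [DecidableEq V] (G : SimpleGraph V)
    (Pt : Finpartition (Finset.univ : Finset V)) : Prop :=
  ∀ Q ∈ Pt.parts, ∀ x ∈ Q, ∀ y ∈ Q, x ≠ y →
    ∃ P ∈ Pt.parts, SetStronglyResolves G P x y

noncomputable def strongPartitionDim (G : SimpleGraph V) [Fintype V] [DecidableEq V] : ℕ :=
  sInf {n | ∃ Pt : Finpartition (Finset.univ : Finset V),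
    Pt.parts.card = n ∧ IsStrongResolvingPartition G Pt}

/-- distance from an edge (as an unordered pair) to a vertex -/
noncomputable def edgeDist (G : SimpleGraph V) (e : Sym2 V) (v : V) : ℕ :=
  Sym2.lift ⟨fun a b => min (G.dist a v) (G.dist b v), fun a b => min_comm _ _⟩ e

def IsEdgeResolvingSet (G : SimpleGraph V) (S : Set V) : Prop :=
  ∀ e ∈ G.edgeSet, ∀ f ∈ G.edgeSet, e ≠ f → ∃ x ∈ S, edgeDist G e x ≠ edgeDist G f x

noncomputable def edgeMetricDim (G : SimpleGraph V) [Fintype V] : ℕ :=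
  sInf {n | ∃ S : Finset V, S.card = n ∧ IsEdgeResolvingSet G ↑S}

noncomputable def Rset (G : SimpleGraph V) [Fintype V] (x y : V) : Finset V :=
  Finset.univ.filter fun w => G.dist x w ≠ G.dist y w

def IsResolvingFunction (G : SimpleGraph V) [Fintype V] (f : V → ℝ) : Prop :=
  (∀ v : V, 0 ≤ f v ∧ f v ≤ 1) ∧
    ∀ x y : V, x ≠ y → 1 ≤ ∑ w ∈ Rset G x y, f w

noncomputable def fracMetricDim (G : SimpleGraph V) [Fintype V] : ℝ :=
  sInf {t : ℝ | ∃ f : V → ℝ, IsResolvingFunction G f ∧ t = ∑ v, f v}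

def AreTwins (G : SimpleGraph V) (u v : V) : Prop :=
  u ≠ v ∧ (G.neighborSet u = G.neighborSet v ∨
    insert u (G.neighborSet u) = insert v (G.neighborSet v))

noncomputable def graphDiam (G : SimpleGraph V) : ℕ :=
  sSup (Set.range fun p : V × V => G.dist p.1 p.2)


lemma fsetDist_singleton (G : SimpleGraph V) (x y : V) : fsetDist G x {y} = G.dist x y := by
  have h : {d | ∃ w ∈ ({y} : Finset V), G.dist x w = d} = {G.dist x y} := by
    ext d
    simp [eq_comm]
  rw [fsetDist, h, csInf_singleton]

lemma fsetDist_eq_zero (G : SimpleGraph V) {x : V} {P : Finset V} (hx : x ∈ P) :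
    fsetDist G x P = 0 := by
  have h0 : (0 : ℕ) ∈ {d | ∃ w ∈ P, G.dist x w = d} := ⟨x, hx, SimpleGraph.dist_self⟩
  exact Nat.sInf_eq_zero.mpr (Or.inl h0)

lemma fsetDist_top_eq_one {x : V} {P : Finset V} (hP : P.Nonempty) (hx : x ∉ P) :
    fsetDist (⊤ : SimpleGraph V) x P = 1 := by
  have h : {d | ∃ w ∈ P, (⊤ : SimpleGraph V).dist x w = d} = {1} := by
    ext d
    constructor
    · rintro ⟨w, hw, rfl⟩
      have hxw : x ≠ w := fun h => hx (h ▸ hw)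
      exact SimpleGraph.dist_eq_one_iff_adj.mpr hxw
    · rintro rfl
      obtain ⟨w, hw⟩ := hP
      have hxw : x ≠ w := fun h => hx (h ▸ hw)
      exact ⟨w, hw, SimpleGraph.dist_eq_one_iff_adj.mpr hxw⟩
  rw [fsetDist, h, csInf_singleton]

/-- The setoid identifying exactly the two vertices `a` and `c`. -/
def pairSetoid [DecidableEq V] (a c : V) : Setoid V where
  r s t := (s = a ∨ s = c) ∧ (t = a ∨ t = c) ∨ s = t
  iseqv := by
    refine ⟨fun x => Or.inr rfl, ?_, ?_⟩
    · rintro x y (⟨h1, h2⟩ | rfl)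
      · exact Or.inl ⟨h2, h1⟩
      · exact Or.inr rfl
    · rintro x y z (⟨h1, h2⟩ | rfl) (⟨h3, h4⟩ | rfl)
      · exact Or.inl ⟨h1, h4⟩
      · exact Or.inl ⟨h1, h2⟩
      · exact Or.inl ⟨h3, h4⟩
      · exact Or.inr rfl

instance [DecidableEq V] (a c : V) : DecidableRel (pairSetoid a c).r := fun s t =>
  decidable_of_iff ((s = a ∨ s = c) ∧ (t = a ∨ t = c) ∨ s = t) Iff.rfl

theorem stmt15 [Fintype V] [DecidableEq V] (G : SimpleGraph V) (hG : G.Connected) :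
    partitionDim G = Fintype.card V ↔ G = ⊤ := by
  constructor
  · intro h
    by_contra hne
    -- find a non-adjacent pair
    have hex : ∃ a b : V, a ≠ b ∧ ¬ G.Adj a b := by
      by_contra h'
      push_neg at h'
      apply hne
      ext x y
      simp only [SimpleGraph.top_adj]
      exact ⟨fun hxy => hxy.ne, fun hxy => h' x y hxy⟩
    obtain ⟨a, b, hab, hnadj⟩ := hex
    have h2 : 2 ≤ G.dist a b := by
      have h0 : 0 < G.dist a b := hG.pos_dist_of_ne hab
      have h1 : G.dist a b ≠ 1 := fun h => hnadj (SimpleGraph.dist_eq_one_iff_adj.mp h)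
      omega
    obtain ⟨p, hp⟩ := hG.exists_walk_length_eq_dist a b
    cases p with
    | nil => simp at hp; simp at h2
    | @cons _ c _ hadj q =>
      rw [SimpleGraph.Walk.length_cons] at hp
      have hcb : G.dist c b ≤ q.length := SimpleGraph.dist_le q
      have hkey : G.dist c b ≠ G.dist a b := by omega
      have hca : c ≠ a := fun h => hadj.ne (h.symm)
      have hcb' : c ≠ b := fun h => hnadj (h ▸ hadj)
      -- the partition with parts {a,c} and singletons elsewhere
      set Pt := Finpartition.ofSetoid (pairSetoid a c) with hPt
      have hpart_sing : ∀ x : V, x ≠ a → x ≠ c → Pt.part x = {x} := by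
        intro x hxa hxc
        ext t
        rw [hPt, Finpartition.mem_part_ofSetoid_iff_rel]
        show (x = a ∨ x = c) ∧ _ ∨ x = t ↔ _
        simp only [Finset.mem_singleton]
        constructor
        · rintro (⟨h1, _⟩ | rfl)
          · exact absurd h1 (by tauto)
          · rfl
        · rintro rfl; exact Or.inr rfl
      have hamem : a ∈ Pt.part a := Pt.mem_part (Finset.mem_univ a)
      have hcmem : c ∈ Pt.part a := by
        rw [hPt, Finpartition.mem_part_ofSetoid_iff_rel]
        exact Or.inl ⟨Or.inl rfl, Or.inr rfl⟩
      -- the partition has fewer parts than vertices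
      have hlt : Pt.parts.card < Fintype.card V := by
        calc Pt.parts.card = ∑ _P ∈ Pt.parts, 1 := by simp
          _ < ∑ P ∈ Pt.parts, P.card := by
              refine Finset.sum_lt_sum (fun i hi => (Pt.nonempty_of_mem_parts hi).card_pos)
                ⟨Pt.part a, Pt.part_mem.mpr (Finset.mem_univ a), ?_⟩
              exact Finset.one_lt_card.mpr ⟨a, hamem, c, hcmem, fun h => hca h.symm⟩
          _ = Fintype.card V := by rw [Pt.sum_card_parts, Finset.card_univ]
      -- the partition is resolving
      have hres : IsResolvingPartition G Pt := by
        intro x y hxy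
        by_cases hx : x ≠ a ∧ x ≠ c
        · refine ⟨Pt.part x, Pt.part_mem.mpr (Finset.mem_univ x), ?_⟩
          rw [hpart_sing x hx.1 hx.2, fsetDist_singleton, fsetDist_singleton,
            SimpleGraph.dist_self]
          exact (hG.pos_dist_of_ne (Ne.symm hxy)).ne'.symm
        · by_cases hy : y ≠ a ∧ y ≠ c
          · refine ⟨Pt.part y, Pt.part_mem.mpr (Finset.mem_univ y), ?_⟩
            rw [hpart_sing y hy.1 hy.2, fsetDist_singleton, fsetDist_singleton,
              SimpleGraph.dist_self]
            exact (hG.pos_dist_of_ne hxy).ne'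
          · -- both x and y lie in {a, c}
            push_neg at hx hy
            refine ⟨Pt.part b, Pt.part_mem.mpr (Finset.mem_univ b), ?_⟩
            rw [hpart_sing b (Ne.symm hab) (Ne.symm hcb'), fsetDist_singleton, fsetDist_singleton]
            rcases Classical.em (x = a) with rfl | hxa
            · have : y = c := by tauto
              subst this
              exact fun h => hkey h.symm
            · have hxc : x = c := by tauto
              have hya : y = a := by
                rcases Classical.em (y = a) with h | h
                · exact h
                · exact absurd (hy h) (by rw [hxc] at hxy; exact fun hyc => hxy hyc.symm)
              subst hxc; subst hya
              exact hkey
      have hmem : Pt.parts.card ∈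
          {n | ∃ Pt : Finpartition (Finset.univ : Finset V),
            Pt.parts.card = n ∧ IsResolvingPartition G Pt} := ⟨Pt, rfl, hres⟩
      have := Nat.sInf_le hmem
      rw [partitionDim] at h
      omega
  · intro h
    subst h
    -- the discrete partition resolves
    have hbotres : IsResolvingPartition (⊤ : SimpleGraph V) (⊥ : Finpartition (Finset.univ : Finset V)) := by
      intro u v huv
      refine ⟨{u}, ?_, ?_⟩
      · rw [Finpartition.mem_bot_iff]
        exact ⟨u, Finset.mem_univ u, rfl⟩
      · rw [fsetDist_singleton, fsetDist_singleton, SimpleGraph.dist_self]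
        exact (hG.pos_dist_of_ne (Ne.symm huv)).ne'.symm
    have hmem : Fintype.card V ∈
        {n | ∃ Pt : Finpartition (Finset.univ : Finset V),
          Pt.parts.card = n ∧ IsResolvingPartition (⊤ : SimpleGraph V) Pt} :=
      ⟨⊥, by rw [Finpartition.card_bot, Finset.card_univ], hbotres⟩
    refine le_antisymm (Nat.sInf_le hmem) (le_csInf ⟨_, hmem⟩ ?_)
    rintro m ⟨Pt, hcard, hres⟩
    -- every part of a resolving partition of K_n is a singleton
    have hsing : ∀ P ∈ Pt.parts, P.card = 1 := by
      intro P hP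
      by_contra hne1
      have h1 : 1 < P.card := by
        have := (Pt.nonempty_of_mem_parts hP).card_pos
        omega
      obtain ⟨x, hx, y, hy, hxy⟩ := Finset.one_lt_card.mp h1
      obtain ⟨Q, hQ, hne⟩ := hres x y hxy
      apply hne
      by_cases hQP : Q = P
      · subst hQP
        rw [fsetDist_eq_zero _ hx, fsetDist_eq_zero _ hy]
      · have hxQ : x ∉ Q := fun hxQ => hQP (Pt.eq_of_mem_parts hQ hP hxQ hx)
        have hyQ : y ∉ Q := fun hyQ => hQP (Pt.eq_of_mem_parts hQ hP hyQ hy)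
        rw [fsetDist_top_eq_one (Pt.nonempty_of_mem_parts hQ) hxQ,
          fsetDist_top_eq_one (Pt.nonempty_of_mem_parts hQ) hyQ]
    calc Fintype.card V = (Finset.univ : Finset V).card := (Finset.card_univ).symm
      _ = ∑ P ∈ Pt.parts, P.card := Pt.sum_card_parts.symm
      _ = ∑ _P ∈ Pt.parts, 1 := Finset.sum_congr rfl hsing
      _ = Pt.parts.card := by simp
      _ ≤ m := hcard.le
end

section
/- If a connected graph G has order n, partition dimension p, and diameter s, then n ≤ p·s^(p−1). -/
open SimpleGraph Finset

variable {V : Type*}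

lemma dist_le_graphDiam [Fintype V] (G : SimpleGraph V) (u v : V) :
    G.dist u v ≤ graphDiam G :=
  le_csSup (Set.Finite.bddAbove (Set.finite_range _)) ⟨(u, v), rfl⟩

lemma fsetDist_eq_zero_of_mem (G : SimpleGraph V) {v : V} {P : Finset V} (h : v ∈ P) :
    fsetDist G v P = 0 :=
  Nat.le_antisymm (Nat.sInf_le ⟨v, h, SimpleGraph.dist_self⟩) (Nat.zero_le _)

lemma one_le_fsetDist (G : SimpleGraph V) (hG : G.Connected) {v : V} {P : Finset V}
    (hP : P.Nonempty) (hv : v ∉ P) : 1 ≤ fsetDist G v P := by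
  obtain ⟨w0, hw0⟩ := hP
  have hne : {d | ∃ w ∈ P, G.dist v w = d}.Nonempty := ⟨_, w0, hw0, rfl⟩
  obtain ⟨w, hw, hdw⟩ := Nat.sInf_mem hne
  by_contra hlt
  have h0 : G.dist v w = 0 := by
    rw [hdw]; show fsetDist G v P = 0; omega
  rw [hG.dist_eq_zero_iff] at h0
  exact hv (h0 ▸ hw)

lemma fsetDist_le_graphDiam [Fintype V] (G : SimpleGraph V) {v : V} {P : Finset V}
    (hP : P.Nonempty) : fsetDist G v P ≤ graphDiam G := by
  obtain ⟨w, hw⟩ := hP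
  exact le_trans (Nat.sInf_le ⟨w, hw, rfl⟩) (dist_le_graphDiam G v w)

theorem stmt16 [Fintype V] [DecidableEq V] (G : SimpleGraph V) (hG : G.Connected) :
    Fintype.card V ≤ partitionDim G * graphDiam G ^ (partitionDim G - 1) := by
  classical
  -- the defining set is nonempty, witnessed by the discrete partition
  have hbot : IsResolvingPartition G (⊥ : Finpartition (Finset.univ : Finset V)) := by
    intro u v huv
    refine ⟨{u}, ?_, ?_⟩
    · rw [Finpartition.parts_bot]
      exact mem_map.2 ⟨u, mem_univ u, rfl⟩
    · have h1 : fsetDist G u {u} = 0 := fsetDist_eq_zero_of_mem G (mem_singleton_self u)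
      have h2 : 1 ≤ fsetDist G v {u} :=
        one_le_fsetDist G hG ⟨u, mem_singleton_self u⟩ (by simp [huv.symm])
      omega
  have hne : {n | ∃ Pt : Finpartition (Finset.univ : Finset V),
      Pt.parts.card = n ∧ IsResolvingPartition G Pt}.Nonempty :=
    ⟨_, ⊥, rfl, hbot⟩
  obtain ⟨Pt, hcard, hres⟩ := Nat.sInf_mem hne
  rw [show partitionDim G = Pt.parts.card from hcard.symm]
  rcases le_or_gt (Fintype.card V) 1 with h1 | h1
  · -- small case: at most one vertex
    rcases le_or_gt (Fintype.card V) 0 with h0 | h0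
    · omega
    -- card V = 1, so Pt has exactly one part
    have hsum := Pt.sum_card_parts
    rw [Finset.card_univ] at hsum
    have hpos : ∀ P ∈ Pt.parts, 1 ≤ P.card := fun P hP =>
      Finset.card_pos.2 (Pt.nonempty_of_mem_parts hP)
    have hple : Pt.parts.card ≤ 1 := by
      by_contra hgt
      have : 2 ≤ ∑ P ∈ Pt.parts, P.card := by
        calc 2 ≤ Pt.parts.card := by omega
        _ = ∑ _P ∈ Pt.parts, 1 := by rw [Finset.sum_const, smul_eq_mul, mul_one]
        _ ≤ ∑ P ∈ Pt.parts, P.card := Finset.sum_le_sum hpos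
      omega
    have hpne : Pt.parts.Nonempty := by
      rcases Pt.parts.eq_empty_or_nonempty with he | h
      · rw [he] at hsum; simp at hsum; omega
      · exact h
    have : Pt.parts.card = 1 := le_antisymm hple (Finset.card_pos.2 hpne)
    rw [this]
    simpa using h1
  · -- main case: at least two vertices
    set s := graphDiam G with hs
    have hs1 : 1 ≤ s := by
      obtain ⟨u, v, huv⟩ := Fintype.exists_pair_of_one_lt_card h1
      exact le_trans (hG.pos_dist_of_ne huv) (dist_le_graphDiam G u v)
    set ι := {P : Finset V // P ∈ Pt.parts} with hι
    have hmemuniv : ∀ v : V, v ∈ (Finset.univ : Finset V) := fun v => mem_univ v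
    let p₀ : V → ι := fun v => ⟨Pt.part v, Pt.part_mem.2 (hmemuniv v)⟩
    have hp₀mem : ∀ v : V, v ∈ (p₀ v).1 := fun v => Pt.mem_part (hmemuniv v)
    have hnotmem : ∀ (v : V) (P : ι), P ≠ p₀ v → v ∉ P.1 := by
      intro v P hP hv
      exact hP (Subtype.ext (Pt.eq_of_mem_parts P.2 (p₀ v).2 hv (hp₀mem v)))
    have hbound : ∀ (v : V) (P : ι), P ≠ p₀ v → fsetDist G v P.1 - 1 < s := by
      intro v P hP
      have h1le : 1 ≤ fsetDist G v P.1 :=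
        one_le_fsetDist G hG (Pt.nonempty_of_mem_parts P.2) (hnotmem v P hP)
      have h2le : fsetDist G v P.1 ≤ s :=
        fsetDist_le_graphDiam G (Pt.nonempty_of_mem_parts P.2)
      omega
    let F : V → Σ P₀ : ι, ({P : ι // P ≠ P₀} → Fin s) :=
      fun v => ⟨p₀ v, fun P => ⟨fsetDist G v P.1.1 - 1, hbound v P.1 P.2⟩⟩
    have hkey : ∀ (P : Finset V) (hP : P ∈ Pt.parts) (x : V),
        fsetDist G x P = (fun t : Σ P₀ : ι, ({Q : ι // Q ≠ P₀} → Fin s) =>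
          if hne : (⟨P, hP⟩ : ι) ≠ t.1 then ((t.2 ⟨⟨P, hP⟩, hne⟩ : Fin s) : ℕ) + 1 else 0)
          (F x) := by
      intro P hP x
      by_cases hc : (⟨P, hP⟩ : ι) ≠ p₀ x
      · simp only [F, dif_pos hc]
        have h1le : 1 ≤ fsetDist G x P :=
          one_le_fsetDist G hG (Pt.nonempty_of_mem_parts hP) (hnotmem x ⟨P, hP⟩ hc)
        omega
      · simp only [F, dif_neg hc]
        push_neg at hc
        have : x ∈ P := by rw [show P = (p₀ x).1 from congrArg Subtype.val hc]; exact hp₀mem x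
        exact fsetDist_eq_zero_of_mem G this
    have hinj : Function.Injective F := by
      intro a b h
      by_contra hab
      obtain ⟨P, hP, hneq⟩ := hres a b hab
      exact hneq (by rw [hkey P hP a, hkey P hP b, h])
    have hcardle := Fintype.card_le_of_injective F hinj
    have hcardι : Fintype.card ι = Pt.parts.card := Fintype.card_coe Pt.parts
    have hfiber : ∀ P₀ : ι, Fintype.card ({P : ι // P ≠ P₀} → Fin s)
        = s ^ (Pt.parts.card - 1) := by
      intro P₀
      rw [Fintype.card_fun, Fintype.card_fin]
      congr 1
      rw [Fintype.card_subtype_compl, Fintype.card_subtype_eq, hcardι]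
    calc Fintype.card V ≤ Fintype.card (Σ P₀ : ι, ({P : ι // P ≠ P₀} → Fin s)) := hcardle
      _ = ∑ P₀ : ι, Fintype.card ({P : ι // P ≠ P₀} → Fin s) := Fintype.card_sigma
      _ = ∑ _P₀ : ι, s ^ (Pt.parts.card - 1) := by
          exact Finset.sum_congr rfl fun P₀ _ => hfiber P₀
      _ = Pt.parts.card * s ^ (Pt.parts.card - 1) := by
          rw [Finset.sum_const, smul_eq_mul, Finset.card_univ, hcardι]
end

section
/- For any connected graph G, the strong partition dimension satisfies ω(G_SR) ≤ pd_s(G) ≤ α(G_SR) + 1, where ω and α denote clique number and vertex cover number of the strong resolving graph. -/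
open SimpleGraph Finset

variable {V : Type*}

-- Auxiliary lemmas --------------------------------------------------------

lemma aux_exists_neighbor_geodesic {G : SimpleGraph V} (hG : G.Connected) {u v : V} (h : u ≠ v) :
    ∃ z, G.Adj u z ∧ G.dist z v + 1 = G.dist u v := by
  obtain ⟨p, hp⟩ := hG.exists_walk_length_eq_dist u v
  cases p with
  | nil => exact absurd rfl h
  | cons ha q =>
    rename_i z
    refine ⟨z, ha, ?_⟩
    have h1 : G.dist z v ≤ q.length := SimpleGraph.dist_le q
    have h2 : G.dist u v ≤ G.dist u z + G.dist z v := hG.dist_triangle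
    have h3 : G.dist u z = 1 := SimpleGraph.dist_eq_one_iff_adj.mpr ha
    simp only [SimpleGraph.Walk.length_cons] at hp
    omega

lemma aux_not_strict {G : SimpleGraph V} (hG : G.Connected) {x y w : V}
    (hmd : MaxDistant G y x) (hw : w ≠ y)
    (h : G.dist x w = G.dist x y + G.dist y w) : False := by
  obtain ⟨z, hz, hzd⟩ := aux_exists_neighbor_geodesic hG (Ne.symm hw)
  have h1 : G.dist x z ≤ G.dist x y := hmd z hz
  have h2 : G.dist x w ≤ G.dist x z + G.dist z w := hG.dist_triangle
  have h3 : 0 < G.dist y w := hG.pos_dist_of_ne (Ne.symm hw)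
  omega

lemma aux_exists_maxDistant [Fintype V] {G : SimpleGraph V} (hG : G.Connected) (y : V) (x : V) :
    ∃ x', MaxDistant G x' y ∧ G.dist y x' = G.dist y x + G.dist x x' := by
  have dist_lt : ∀ a b : V, G.dist a b < Fintype.card V := by
    intro a b
    obtain ⟨p, hp, hl⟩ := hG.exists_path_of_dist a b
    exact hl ▸ hp.length_lt
  have key : ∀ n x, Fintype.card V - G.dist y x ≤ n →
      ∃ x', MaxDistant G x' y ∧ G.dist y x' = G.dist y x + G.dist x x' := by
    intro n
    induction n with
    | zero => intro x hx; exact absurd hx (by have := dist_lt y x; omega)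
    | succ n ih =>
      intro x hx
      by_cases hmax : MaxDistant G x y
      · exact ⟨x, hmax, by simp [SimpleGraph.dist_self]⟩
      · simp only [MaxDistant, not_forall] at hmax
        obtain ⟨z, hz, hzd⟩ := hmax
        push_neg at hzd
        have h1 : G.dist y z ≤ G.dist y x + G.dist x z := hG.dist_triangle
        have h2 : G.dist x z = 1 := SimpleGraph.dist_eq_one_iff_adj.mpr hz
        have h3 : G.dist y z = G.dist y x + 1 := by omega
        obtain ⟨x', hx', hd'⟩ := ih z (by omega)
        refine ⟨x', hx', ?_⟩
        have h4 : G.dist x x' ≤ G.dist x z + G.dist z x' := hG.dist_triangle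
        have h5 : G.dist y x' ≤ G.dist y x + G.dist x x' := hG.dist_triangle
        omega
  exact key (Fintype.card V) x (by omega)

lemma aux_exists_mmd_pair [Fintype V] {G : SimpleGraph V} (hG : G.Connected) {x y : V}
    (hxy : x ≠ y) :
    ∃ u v : V, u ≠ v ∧ MaxDistant G u v ∧ MaxDistant G v u ∧
      G.dist y u = G.dist y x + G.dist x u ∧ G.dist x v = G.dist x y + G.dist y v := by
  have hc : ∀ a b : V, G.dist a b = G.dist b a := fun a b => SimpleGraph.dist_comm
  obtain ⟨u, hu, hud⟩ := aux_exists_maxDistant hG y x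
  obtain ⟨v, hv, hvd⟩ := aux_exists_maxDistant hG u y
  have huv : MaxDistant G u v := by
    intro z hz
    have h1 : G.dist v z ≤ G.dist v y + G.dist y z := hG.dist_triangle
    have h2 : G.dist y z ≤ G.dist y u := hu z hz
    have h3 := hc v y; have h4 := hc v u; have h5 := hc y u
    omega
  have hne : u ≠ v := by
    intro he
    subst he
    have h0 : 0 < G.dist y x := hG.pos_dist_of_ne (Ne.symm hxy)
    have hs : G.dist u u = 0 := SimpleGraph.dist_self
    have h5 := hc y u
    omega
  have t1 : G.dist x v ≤ G.dist x y + G.dist y v := hG.dist_triangle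
  have t2 : G.dist u v ≤ G.dist u x + G.dist x v := hG.dist_triangle
  have h5 := hc y u; have h6 := hc x u; have h7 := hc u x; have h8 := hc y x
  exact ⟨u, v, hne, huv, hv, by omega, by omega⟩

lemma aux_fsetDist_singleton (G : SimpleGraph V) (v u : V) :
    fsetDist G v {u} = G.dist v u := by
  unfold fsetDist
  have : {d | ∃ w ∈ ({u} : Finset V), G.dist v w = d} = {G.dist v u} := by
    ext d; simp [eq_comm]
  rw [this, csInf_singleton]

lemma aux_fsetDist_exists (G : SimpleGraph V) (v : V) {P : Finset V} (hP : P.Nonempty) :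
    ∃ w ∈ P, G.dist v w = fsetDist G v P := by
  have : fsetDist G v P ∈ {d | ∃ w ∈ P, G.dist v w = d} :=
    Nat.sInf_mem ⟨G.dist v hP.choose, hP.choose, hP.choose_spec, rfl⟩
  exact this

lemma aux_fsetDist_le (G : SimpleGraph V) (v : V) {P : Finset V} {w : V} (hw : w ∈ P) :
    fsetDist G v P ≤ G.dist v w :=
  Nat.sInf_le ⟨w, hw, rfl⟩

theorem stmt17 [Fintype V] [DecidableEq V] (G : SimpleGraph V) (hG : G.Connected) :
    (strongResolvingGraph G).cliqueNum ≤ strongPartitionDim G ∧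
      strongPartitionDim G ≤ _root_.vertexCoverNum (strongResolvingGraph G) + 1 := by
  classical
  have hc : ∀ a b : V, G.dist a b = G.dist b a := fun a b => SimpleGraph.dist_comm
  -- Construct a strong resolving partition from a minimum vertex cover.
  have hvc_ne : {n | ∃ S : Finset V, S.card = n ∧
      _root_.IsVertexCover (strongResolvingGraph G) ↑S}.Nonempty :=
    ⟨(Finset.univ : Finset V).card, Finset.univ, rfl, fun u v _ => Or.inl (by simp)⟩
  obtain ⟨S, hScard, hScov⟩ := Nat.sInf_mem hvc_ne
  set A : Finset (Finset V) :=
    insert (Finset.univ \ S) (S.image fun u => ({u} : Finset V)) with hA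
  have hsupindep : A.SupIndep id := by
    rw [Finset.supIndep_iff_pairwiseDisjoint]
    intro a ha b hb hab
    simp only [hA, Finset.coe_insert, Set.mem_insert_iff, Finset.coe_image,
      Set.mem_image, Finset.mem_coe] at ha hb
    have : Disjoint a b := by
      rcases ha with ha | ⟨u, huS, rfl⟩ <;> rcases hb with hb | ⟨w, hwS, rfl⟩
      · exact absurd (ha.trans hb.symm) hab
      · subst ha
        rw [Finset.disjoint_singleton_right, Finset.mem_sdiff]
        exact fun hcon => hcon.2 hwS
      · subst hb
        rw [Finset.disjoint_singleton_left, Finset.mem_sdiff]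
        exact fun hcon => hcon.2 huS
      · rw [Finset.disjoint_singleton]
        intro h; exact hab (by rw [h])
    exact this
  have hsup : A.sup id = (Finset.univ : Finset V) := by
    apply Finset.Subset.antisymm (Finset.subset_univ _)
    intro v _
    rw [Finset.mem_sup]
    by_cases hvS : v ∈ S
    · exact ⟨{v}, Finset.mem_insert_of_mem (Finset.mem_image_of_mem _ hvS),
        Finset.mem_singleton_self v⟩
    · exact ⟨Finset.univ \ S, Finset.mem_insert_self _ _,
        Finset.mem_sdiff.mpr ⟨Finset.mem_univ v, hvS⟩⟩
  set Pt : Finpartition (Finset.univ : Finset V) := Finpartition.ofErase A hsupindep hsup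
    with hPt
  have hPtparts : Pt.parts = A.erase ⊥ := rfl
  have hPtcard : Pt.parts.card ≤ _root_.vertexCoverNum (strongResolvingGraph G) + 1 := by
    calc Pt.parts.card ≤ A.card := by rw [hPtparts]; exact Finset.card_erase_le
      _ ≤ (S.image fun u => ({u} : Finset V)).card + 1 := Finset.card_insert_le _ _
      _ ≤ S.card + 1 := by
          exact Nat.add_le_add_right (Finset.card_image_le) 1
      _ = _root_.vertexCoverNum (strongResolvingGraph G) + 1 := by rw [hScard]; rfl
  have hsrp : IsStrongResolvingPartition G Pt := by
    intro Q hQ x hx y hy hxy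
    rw [hPtparts, Finset.mem_erase] at hQ
    obtain ⟨hQne, hQA⟩ := hQ
    rcases Finset.mem_insert.mp hQA with hQeq | hQim
    swap
    · obtain ⟨u, _, rfl⟩ := Finset.mem_image.mp hQim
      rw [Finset.mem_singleton] at hx hy
      exact absurd (hx.trans hy.symm) hxy
    · subst hQeq
      have hxS : x ∉ S := (Finset.mem_sdiff.mp hx).2
      have hyS : y ∉ S := (Finset.mem_sdiff.mp hy).2
      obtain ⟨u, v, hne, huv, hvu, hdu, hdv⟩ := aux_exists_mmd_pair hG hxy
      have hadj : (strongResolvingGraph G).Adj u v := ⟨hne, huv, hvu⟩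
      have hmemP : ∀ w : V, w ∈ S → ({w} : Finset V) ∈ Pt.parts := by
        intro w hwS
        rw [hPtparts, Finset.mem_erase]
        exact ⟨by simp, Finset.mem_insert_of_mem (Finset.mem_image_of_mem _ hwS)⟩
      rcases hScov u v hadj with huS | hvS
      · refine ⟨{u}, hmemP u huS, ?_, ?_, Or.inr ?_⟩
        · simp only [Finset.mem_singleton]; rintro rfl; exact hxS huS
        · simp only [Finset.mem_singleton]; rintro rfl; exact hyS huS
        · rw [aux_fsetDist_singleton, aux_fsetDist_singleton]
          exact hdu
      · refine ⟨{v}, hmemP v hvS, ?_, ?_, Or.inl ?_⟩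
        · simp only [Finset.mem_singleton]; rintro rfl; exact hxS hvS
        · simp only [Finset.mem_singleton]; rintro rfl; exact hyS hvS
        · rw [aux_fsetDist_singleton, aux_fsetDist_singleton]
          exact hdv
  have hmemset : Pt.parts.card ∈ {n | ∃ Pt : Finpartition (Finset.univ : Finset V),
      Pt.parts.card = n ∧ IsStrongResolvingPartition G Pt} := ⟨Pt, rfl, hsrp⟩
  constructor
  · -- lower bound
    apply le_csInf ⟨Pt.parts.card, hmemset⟩
    rintro n ⟨Qt, hQtcard, hQtres⟩
    obtain ⟨s, hclq⟩ := (strongResolvingGraph G).exists_isNClique_cliqueNum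
    rw [← hclq.2, ← hQtcard]
    have hex : ∀ x : V, ∃ t ∈ Qt.parts, x ∈ t := fun x => Qt.exists_mem (Finset.mem_univ x)
    choose f hfmem hfx using hex
    apply Finset.card_le_card_of_injOn f (fun x _ => hfmem x)
    intro x hxs y hys hfxy
    by_contra hxy
    have hadj : (strongResolvingGraph G).Adj x y := hclq.1 hxs hys hxy
    obtain ⟨_, hmxy, hmyx⟩ := hadj
    obtain ⟨P, hP, hxP, hyP, hcase⟩ :=
      hQtres (f x) (hfmem x) x (hfx x) y (hfxy ▸ hfx y) hxy
    have hPne : P.Nonempty := Qt.nonempty_of_mem_parts hP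
    rcases hcase with h | h
    · obtain ⟨w, hwP, hwd⟩ := aux_fsetDist_exists G y hPne
      have hle : fsetDist G x P ≤ G.dist x w := aux_fsetDist_le G x hwP
      have htri : G.dist x w ≤ G.dist x y + G.dist y w := hG.dist_triangle
      have heq : G.dist x w = G.dist x y + G.dist y w := by omega
      exact aux_not_strict hG hmyx (fun hwy => hyP (hwy ▸ hwP)) heq
    · obtain ⟨w, hwP, hwd⟩ := aux_fsetDist_exists G x hPne
      have hle : fsetDist G y P ≤ G.dist y w := aux_fsetDist_le G y hwP
      have htri : G.dist y w ≤ G.dist y x + G.dist x w := hG.dist_triangle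
      have heq : G.dist y w = G.dist y x + G.dist x w := by omega
      exact aux_not_strict hG hmxy (fun hwx => hxP (hwx ▸ hwP)) heq
  · -- upper bound
    exact le_trans (Nat.sInf_le hmemset) hPtcard
end
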